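/- In the ℤ₂ toric code condensation model, the ground space of the effective Hamiltonian H₀ is exactly two-dimensional: the two coherent states ψ₊ := ψ_{g₀=0; h≡0, g≡0} and ψ₋ := ψ_{g₀=1; h≡0, g≡1} satisfy H₀ ψ± = −2N ψ±; moreover ⟪f, H₀ f⟫ ≥ −2N·⟪f,f⟫ for every f ∈ H, and every f with H₀ f = −2N·f lies in the linear span of ψ₊ and ψ₋. -/

import Mathlib

open scoped ComplexOrder

/-- The effective Hilbert space of the ℤ₂ toric code condensation model with `N` anyon
sites: functions from (condensate label, per-site (charge, flux)) to `ℂ`. -/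
abbrev Hsp (N : ℕ) : Type := (ZMod 2 × (Fin N → ZMod 2 × ZMod 2)) → ℂ

/-- The diagonal operator of multiplication by `c`. -/
noncomputable def diagOp {X : Type*} (c : X → ℂ) : (X → ℂ) →ₗ[ℂ] (X → ℂ) where
  toFun f := fun x => c x * f x
  map_add' f g := by funext x; simp [mul_add]
  map_smul' r f := by funext x; simp [smul_eq_mul]; ring

/-- The creation operator `W_n(e)`. -/
noncomputable def wOp (N : ℕ) (n : Fin N) : Hsp N →ₗ[ℂ] Hsp N :=
  LinearMap.funLeft ℂ ℂ
    (fun p => (p.1 + 1, Function.update p.2 n ((p.2 n).1 + 1, (p.2 n).2)))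

/-- The projector `Q_n` onto states with trivial flux at site `n`. -/
noncomputable def qOp (N : ℕ) (n : Fin N) : Hsp N →ₗ[ℂ] Hsp N :=
  diagOp (fun p => if (p.2 n).2 = 0 then (1 : ℂ) else 0)

/-- The projector `P_n = (1 + W_n(e))/2`. -/
noncomputable def pOp (N : ℕ) (n : Fin N) : Hsp N →ₗ[ℂ] Hsp N :=
  (1 / 2 : ℂ) • (LinearMap.id + wOp N n)

/-- The effective Hamiltonian `H₀ = −Σ_n (Q_n + P_n)`. -/
noncomputable def ham (N : ℕ) : Hsp N →ₗ[ℂ] Hsp N :=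
  -(∑ n : Fin N, (qOp N n + pOp N n))

/-- The inner product `⟪f,f'⟫ = Σ conj(f)·f'` on the effective Hilbert space. -/
noncomputable def inn (N : ℕ) (f f' : Hsp N) : ℂ :=
  ∑ p, (starRingEnd ℂ) (f p) * f' p

/-- The coherent state `ψ_{g₀;h,g}` of the toric code condensation model. -/
noncomputable def coh (N : ℕ) (g0 : ZMod 2) (h g : Fin N → ZMod 2) : Hsp N :=
  fun p => (((2 : ℝ) ^ (-(((N : ℝ) + 1) / 2)) : ℝ) : ℂ) *
    (-1 : ℂ) ^ (g0.val * p.1.val) *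
    ∏ n : Fin N,
      (if (p.2 n).2 = h n then (-1 : ℂ) ^ ((g n).val * ((p.2 n).1).val) else 0)

/-! ### Auxiliary lemmas -/

lemma z2cases (x : ZMod 2) : x = 0 ∨ x = 1 := by revert x; decide

lemma z2add (a : ZMod 2) : a + 1 + 1 = a := by
  have : (1 : ZMod 2) + 1 = 0 := by decide
  rw [add_assoc, this, add_zero]

lemma chi_one (x : ZMod 2) : ((-1 : ℂ)) ^ ((x + 1).val) = -(-1) ^ x.val := by
  rcases z2cases x with h | h <;> subst h <;>
    simp [show ((1:ZMod 2)+1) = 0 from by decide, ZMod.val_one]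

lemma chi_add (x y : ZMod 2) :
    ((-1 : ℂ)) ^ ((x + y).val) = (-1) ^ x.val * (-1) ^ y.val := by
  rcases z2cases x with h | h <;> rcases z2cases y with h' | h' <;> subst h <;> subst h' <;>
    simp [show ((1:ZMod 2)+1) = 0 from by decide, ZMod.val_one]

lemma chi_sum {ι : Type*} (s : Finset ι) (c : ι → ZMod 2) :
    ∏ n ∈ s, ((-1:ℂ)) ^ (c n).val = (-1) ^ ((∑ n ∈ s, c n).val) := by
  classical
  induction s using Finset.induction_on with
  | empty => simp
  | @insert m s' hm ih => rw [Finset.prod_insert hm, Finset.sum_insert hm, chi_add, ih]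

/-- The spin-flip map underlying `wOp`. -/
def sig (N : ℕ) (n : Fin N) :
    (ZMod 2 × (Fin N → ZMod 2 × ZMod 2)) → (ZMod 2 × (Fin N → ZMod 2 × ZMod 2)) :=
  fun p => (p.1 + 1, Function.update p.2 n ((p.2 n).1 + 1, (p.2 n).2))

lemma sig_invol (N : ℕ) (n : Fin N) : Function.Involutive (sig N n) := by
  intro p
  obtain ⟨a, j⟩ := p
  simp only [sig, Function.update_self]
  refine Prod.ext (z2add a) ?_
  simp only []
  rw [Function.update_idem]
  have : ((j n).1 + 1 + 1, (j n).2) = j n := by rw [z2add]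
  rw [this, Function.update_eq_self]

lemma wOp_apply (N : ℕ) (n : Fin N) (f : Hsp N) : wOp N n f = fun p => f (sig N n p) := rfl

/-! ### Eigenvector computations -/

lemma coh_zero_of_flux {N : ℕ} (n : Fin N) (g0 : ZMod 2) (g : Fin N → ZMod 2)
    (p : ZMod 2 × (Fin N → ZMod 2 × ZMod 2)) (hφ : (p.2 n).2 ≠ 0) :
    coh N g0 0 g p = 0 := by
  rw [coh, Finset.prod_eq_zero (Finset.mem_univ n) (by simp [hφ]), mul_zero]

lemma qOp_coh {N : ℕ} (n : Fin N) (g0 : ZMod 2) (g : Fin N → ZMod 2) :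
    qOp N n (coh N g0 0 g) = coh N g0 0 g := by
  funext p
  by_cases hφ : (p.2 n).2 = 0
  · simp [qOp, diagOp, hφ]
  · simp [qOp, diagOp, hφ, coh_zero_of_flux n g0 g p hφ]

lemma wOp_coh {N : ℕ} (n : Fin N) (g0 : ZMod 2) (g : Fin N → ZMod 2) (hg : g n = g0) :
    wOp N n (coh N g0 0 g) = coh N g0 0 g := by
  funext p
  rw [wOp_apply]
  by_cases hφ : (p.2 n).2 = 0
  · show coh N g0 0 g (sig N n p) = coh N g0 0 g p
    rw [coh, coh]
    have hsplit : ∀ (q : ZMod 2 × (Fin N → ZMod 2 × ZMod 2)),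
        (∏ m : Fin N, (if (q.2 m).2 = (0 : Fin N → ZMod 2) m then
            (-1 : ℂ) ^ ((g m).val * ((q.2 m).1).val) else 0)) =
        (if (q.2 n).2 = 0 then (-1 : ℂ) ^ ((g n).val * ((q.2 n).1).val) else 0) *
          ∏ m ∈ Finset.univ.erase n, (if (q.2 m).2 = (0 : Fin N → ZMod 2) m then
            (-1 : ℂ) ^ ((g m).val * ((q.2 m).1).val) else 0) := by
      intro q
      rw [← Finset.mul_prod_erase Finset.univ _ (Finset.mem_univ n)]
      simp
    rw [hsplit, hsplit]
    have herase : ∏ m ∈ Finset.univ.erase n, (if (((sig N n p).2) m).2 = (0 : Fin N → ZMod 2) m then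
            (-1 : ℂ) ^ ((g m).val * ((((sig N n p).2) m).1).val) else 0) =
        ∏ m ∈ Finset.univ.erase n, (if ((p.2) m).2 = (0 : Fin N → ZMod 2) m then
            (-1 : ℂ) ^ ((g m).val * (((p.2) m).1).val) else 0) := by
      refine Finset.prod_congr rfl fun m hm => ?_
      have hmn : m ≠ n := Finset.ne_of_mem_erase hm
      simp [sig, Function.update_of_ne hmn]
    rw [herase]
    have hsign : ((sig N n p).2 n) = ((p.2 n).1 + 1, (p.2 n).2) := by
      simp [sig]
    rw [hsign]
    simp only [hφ, if_pos, Pi.zero_apply, if_true]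
    show ((((2:ℝ) ^ (-(((N:ℝ)+1)/2)) : ℝ) : ℂ)) * (-1) ^ (g0.val * ((sig N n p).1).val) *
        ((-1 : ℂ) ^ ((g n).val * ((p.2 n).1 + 1).val) * _) = _
    have hfst : (sig N n p).1 = p.1 + 1 := rfl
    rw [hfst, hg]
    rcases z2cases g0 with h0 | h0 <;> subst h0
    · simp
    · simp only [ZMod.val_one, one_mul]
      rw [chi_one, chi_one]
      ring
  · show coh N g0 0 g (sig N n p) = coh N g0 0 g p
    rw [show coh N g0 0 g (sig N n p) = 0 from
      coh_zero_of_flux n g0 g _ (by simpa [sig] using hφ),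
      coh_zero_of_flux n g0 g p hφ]

lemma pOp_coh {N : ℕ} (n : Fin N) (g0 : ZMod 2) (g : Fin N → ZMod 2) (hg : g n = g0) :
    pOp N n (coh N g0 0 g) = coh N g0 0 g := by
  rw [pOp]
  simp only [LinearMap.smul_apply, LinearMap.add_apply, LinearMap.id_apply, wOp_coh n g0 g hg]
  rw [smul_add]
  norm_num
  rw [← two_smul ℂ, smul_smul]
  norm_num

lemma ham_coh {N : ℕ} (g0 : ZMod 2) (g : Fin N → ZMod 2) (hg : ∀ n, g n = g0) :
    ham N (coh N g0 0 g) = (-(2 * (N : ℂ))) • coh N g0 0 g := by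
  rw [ham]
  simp only [LinearMap.neg_apply, LinearMap.sum_apply, LinearMap.add_apply]
  have : ∀ n : Fin N, qOp N n (coh N g0 0 g) + pOp N n (coh N g0 0 g)
      = (2:ℂ) • coh N g0 0 g := by
    intro n
    rw [qOp_coh n g0 g, pOp_coh n g0 g (hg n), two_smul ℂ]
  rw [Finset.sum_congr rfl (fun n _ => this n), Finset.sum_const, Finset.card_univ,
    Fintype.card_fin, ← Nat.cast_smul_eq_nsmul ℂ, smul_smul, ← neg_smul]
  ring_nf

/-! ### Inner product lemmas -/

lemma term_nonneg (z : ℂ) : 0 ≤ (starRingEnd ℂ) z * z := by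
  rw [← Complex.normSq_eq_conj_mul_self]
  exact_mod_cast Complex.normSq_nonneg z

lemma term_eq_zero {z : ℂ} (h : (starRingEnd ℂ) z * z = 0) : z = 0 := by
  rw [← Complex.normSq_eq_conj_mul_self] at h
  exact Complex.normSq_eq_zero.mp (by exact_mod_cast h)

lemma inn_nonneg (N : ℕ) (f : Hsp N) : 0 ≤ inn N f f :=
  Finset.sum_nonneg fun p _ => term_nonneg (f p)

lemma inn_self_eq_zero {N : ℕ} {f : Hsp N} (h : inn N f f = 0) : f = 0 := by
  funext p
  have := (Finset.sum_eq_zero_iff_of_nonneg (fun p _ => term_nonneg (f p))).mp h p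
    (Finset.mem_univ p)
  exact term_eq_zero this

lemma inn_smul_right (N : ℕ) (c : ℂ) (f g : Hsp N) : inn N f (c • g) = c * inn N f g := by
  simp only [inn, Pi.smul_apply, smul_eq_mul, Finset.mul_sum]
  exact Finset.sum_congr rfl fun p _ => by ring

lemma inn_expand_sub (N : ℕ) (f g : Hsp N) :
    inn N (f - g) (f - g) = inn N f f - inn N f g - inn N g f + inn N g g := by
  simp only [inn, Pi.sub_apply, map_sub]
  rw [show (∑ p, ((starRingEnd ℂ) (f p) - (starRingEnd ℂ) (g p)) * (f p - g p))
      = ∑ p, ((starRingEnd ℂ) (f p) * f p - (starRingEnd ℂ) (f p) * g p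
          - (starRingEnd ℂ) (g p) * f p + (starRingEnd ℂ) (g p) * g p) from
    Finset.sum_congr rfl fun p _ => by ring]
  rw [Finset.sum_add_distrib, Finset.sum_sub_distrib, Finset.sum_sub_distrib]

lemma inn_w_symm (N : ℕ) (n : Fin N) (f : Hsp N) :
    inn N f (wOp N n f) = inn N (wOp N n f) f := by
  rw [wOp_apply]
  simp only [inn]
  rw [← Equiv.sum_comp ((sig_invol N n).toPerm)
    (fun p => (starRingEnd ℂ) (f (sig N n p)) * f p)]
  refine Finset.sum_congr rfl fun p _ => ?_
  simp [Function.Involutive.coe_toPerm, sig_invol N n p]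

lemma inn_w_w (N : ℕ) (n : Fin N) (f : Hsp N) :
    inn N (wOp N n f) (wOp N n f) = inn N f f := by
  rw [wOp_apply]
  simp only [inn]
  rw [← Equiv.sum_comp ((sig_invol N n).toPerm)
    (fun p => (starRingEnd ℂ) (f p) * f p)]
  simp [Function.Involutive.coe_toPerm]

lemma inn_p_eq (N : ℕ) (n : Fin N) (f : Hsp N) :
    inn N f (pOp N n f) = (1/2) * (inn N f f + inn N f (wOp N n f)) := by
  simp only [inn, pOp, LinearMap.smul_apply, LinearMap.add_apply, LinearMap.id_apply,
    Pi.smul_apply, Pi.add_apply, smul_eq_mul]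
  rw [← Finset.sum_add_distrib, Finset.mul_sum]
  exact Finset.sum_congr rfl fun p _ => by ring

lemma inn_sub_p (N : ℕ) (n : Fin N) (f : Hsp N) :
    inn N f f - inn N f (pOp N n f)
      = (1/4) * inn N (f - wOp N n f) (f - wOp N n f) := by
  rw [inn_p_eq, inn_expand_sub, inn_w_w, ← inn_w_symm]
  ring

lemma inn_sub_q (N : ℕ) (n : Fin N) (f : Hsp N) :
    inn N f f - inn N f (qOp N n f)
      = ∑ p, (if (p.2 n).2 = 0 then 0 else (starRingEnd ℂ) (f p) * f p) := by
  simp only [inn, qOp, diagOp, LinearMap.coe_mk, AddHom.coe_mk]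
  rw [← Finset.sum_sub_distrib]
  refine Finset.sum_congr rfl fun p _ => ?_
  by_cases h : (p.2 n).2 = 0 <;> simp [h]

lemma inn_sub_q_nonneg (N : ℕ) (n : Fin N) (f : Hsp N) :
    0 ≤ inn N f f - inn N f (qOp N n f) := by
  rw [inn_sub_q]
  refine Finset.sum_nonneg fun p _ => ?_
  by_cases h : (p.2 n).2 = 0 <;> simp [h, term_nonneg]

lemma quarter_nonneg : (0:ℂ) ≤ 1/4 := by
  rw [Complex.le_def]
  norm_num

lemma inn_sub_p_nonneg (N : ℕ) (n : Fin N) (f : Hsp N) :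
    0 ≤ inn N f f - inn N f (pOp N n f) := by
  rw [inn_sub_p]
  exact mul_nonneg quarter_nonneg (inn_nonneg N (f - wOp N n f))

lemma inn_ham_eq (N : ℕ) (f : Hsp N) :
    inn N f (ham N f)
      = -∑ n : Fin N, (inn N f (qOp N n f) + inn N f (pOp N n f)) := by
  simp only [inn, ham, LinearMap.neg_apply, LinearMap.sum_apply, LinearMap.add_apply,
    Pi.neg_apply, Finset.sum_apply, Pi.add_apply, mul_neg, Finset.mul_sum, mul_add]
  rw [Finset.sum_neg_distrib, neg_inj, Finset.sum_comm]
  exact Finset.sum_congr rfl fun n _ => by rw [Finset.sum_add_distrib]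

lemma sum_two_inn (N : ℕ) (f : Hsp N) :
    ∑ _n : Fin N, (inn N f f + inn N f f) = 2 * (N:ℂ) * inn N f f := by
  rw [Finset.sum_const, Finset.card_univ, Fintype.card_fin, nsmul_eq_mul]
  ring

/-! ### Orbit lemma -/

lemma orbit_const {N : ℕ} (f : Hsp N)
    (hfsig : ∀ (n : Fin N) p, f (sig N n p) = f p) :
    ∀ (s : Finset (Fin N)) (a : ZMod 2) (c : Fin N → ZMod 2), (∀ n ∉ s, c n = 0) →
      f (a, fun n => (c n, 0)) = f (a + ∑ n ∈ s, c n, fun _ => ((0:ZMod 2), (0:ZMod 2))) := by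
  intro s
  induction s using Finset.induction_on with
  | empty =>
    intro a c hc
    have : c = fun _ => 0 := funext fun n => hc n (Finset.notMem_empty n)
    subst this
    simp
  | @insert m s' hm ih =>
    intro a c hc
    rcases z2cases (c m) with h0 | h1
    · have hc' : ∀ n ∉ s', c n = 0 := by
        intro n hn
        by_cases hnm : n = m
        · subst hnm; exact h0
        · exact hc n (by simp [Finset.mem_insert, hnm, hn])
      rw [ih a c hc', Finset.sum_insert hm, h0, zero_add]
    · have hstep : f (a, fun n => (c n, 0)) = f (a + 1, fun n => (Function.update c m 0 n, 0)) := by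
        rw [← hfsig m (a, fun n => (c n, 0))]
        congr 1
        refine Prod.ext rfl ?_
        funext n
        by_cases hnm : n = m
        · subst hnm
          simp [sig, h1, show (1:ZMod 2)+1 = 0 from by decide]
        · simp [sig, Function.update_of_ne hnm]
      have hc' : ∀ n ∉ s', Function.update c m 0 n = 0 := by
        intro n hn
        by_cases hnm : n = m
        · subst hnm; simp
        · rw [Function.update_of_ne hnm]
          exact hc n (by simp [Finset.mem_insert, hnm, hn])
      rw [hstep, ih (a + 1) _ hc']
      congr 2
      rw [Finset.sum_insert hm, h1]
      have : ∑ n ∈ s', Function.update c m 0 n = ∑ n ∈ s', c n :=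
        Finset.sum_congr rfl fun n hn => Function.update_of_ne (fun h => hm (by rwa [← h])) 0 c
      rw [this]
      ring

/-! ### Main theorem -/

/-- the ground space of `H₀` is exactly two-dimensional: the coherent
states `ψ₊ = ψ_{0;0,0}` and `ψ₋ = ψ_{1;0,1}` are eigenvectors with eigenvalue `−2N`,
the Hamiltonian is bounded below by `−2N`, and every eigenvector with eigenvalue `−2N`
lies in the span of `ψ₊` and `ψ₋`. -/
theorem ham_ground_space (N : ℕ) (hN : 1 ≤ N) :
    ham N (coh N 0 0 0) = (-(2 * (N : ℂ))) • coh N 0 0 0 ∧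
    ham N (coh N 1 0 1) = (-(2 * (N : ℂ))) • coh N 1 0 1 ∧
    (∀ f : Hsp N, (-(2 * (N : ℂ))) * inn N f f ≤ inn N f (ham N f)) ∧
    (∀ f : Hsp N, ham N f = (-(2 * (N : ℂ))) • f →
      f ∈ Submodule.span ℂ ({coh N 0 0 0, coh N 1 0 1} : Set (Hsp N))) := by
  refine ⟨ham_coh 0 0 (fun n => rfl), ham_coh 1 1 (fun n => rfl), ?_, ?_⟩
  · -- lower bound
    intro f
    rw [inn_ham_eq]
    have hle : ∑ n : Fin N, (inn N f (qOp N n f) + inn N f (pOp N n f))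
        ≤ ∑ _n : Fin N, (inn N f f + inn N f f) :=
      Finset.sum_le_sum fun n _ => add_le_add
        (sub_nonneg.mp (inn_sub_q_nonneg N n f)) (sub_nonneg.mp (inn_sub_p_nonneg N n f))
    rw [sum_two_inn] at hle
    calc (-(2 * (N:ℂ))) * inn N f f = -(2 * (N:ℂ) * inn N f f) := by ring
    _ ≤ -∑ n : Fin N, (inn N f (qOp N n f) + inn N f (pOp N n f)) := neg_le_neg hle
  · -- ground space
    intro f hf
    have hinn : inn N f (ham N f) = -(2 * (N:ℂ)) * inn N f f := by
      rw [hf, inn_smul_right]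
    have hsum0 : ∑ n : Fin N, ((inn N f f - inn N f (qOp N n f))
        + (inn N f f - inn N f (pOp N n f))) = 0 := by
      have h1 : ∑ n : Fin N, ((inn N f f - inn N f (qOp N n f))
            + (inn N f f - inn N f (pOp N n f)))
          = ∑ _n : Fin N, (inn N f f + inn N f f)
            - ∑ n : Fin N, (inn N f (qOp N n f) + inn N f (pOp N n f)) := by
        rw [← Finset.sum_sub_distrib]
        exact Finset.sum_congr rfl fun n _ => by ring
      have h2 : ∑ n : Fin N, (inn N f (qOp N n f) + inn N f (pOp N n f))
          = 2 * (N:ℂ) * inn N f f := by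
        have := inn_ham_eq N f
        rw [hinn] at this
        linear_combination this
      rw [h1, h2, sum_two_inn]
      ring
    have hterm := (Finset.sum_eq_zero_iff_of_nonneg (fun n _ =>
      add_nonneg (inn_sub_q_nonneg N n f) (inn_sub_p_nonneg N n f))).mp hsum0
    have hq0 : ∀ n : Fin N, inn N f f - inn N f (qOp N n f) = 0 := by
      intro n
      have h := hterm n (Finset.mem_univ n)
      have ha := inn_sub_q_nonneg N n f
      have hb := inn_sub_p_nonneg N n f
      have : inn N f f - inn N f (qOp N n f) ≤ 0 := by
        calc inn N f f - inn N f (qOp N n f)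
            ≤ (inn N f f - inn N f (qOp N n f)) + (inn N f f - inn N f (pOp N n f)) :=
          le_add_of_nonneg_right hb
        _ = 0 := h
      exact le_antisymm this ha
    have hp0 : ∀ n : Fin N, inn N f f - inn N f (pOp N n f) = 0 := by
      intro n
      have h := hterm n (Finset.mem_univ n)
      have ha := inn_sub_q_nonneg N n f
      have hb := inn_sub_p_nonneg N n f
      have : inn N f f - inn N f (pOp N n f) ≤ 0 := by
        calc inn N f f - inn N f (pOp N n f)
            ≤ (inn N f f - inn N f (qOp N n f)) + (inn N f f - inn N f (pOp N n f)) :=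
          le_add_of_nonneg_left ha
        _ = 0 := h
      exact le_antisymm this hb
    have hfzero : ∀ (n : Fin N) p, (p.2 n).2 ≠ 0 → f p = 0 := by
      intro n p hp
      have h := hq0 n
      rw [inn_sub_q] at h
      have h2 := (Finset.sum_eq_zero_iff_of_nonneg (fun q _ => by
        by_cases hc : (q.2 n).2 = 0 <;> simp [hc, term_nonneg])).mp h p (Finset.mem_univ p)
      rw [if_neg hp] at h2
      exact term_eq_zero h2
    have hfsig : ∀ (n : Fin N) p, f (sig N n p) = f p := by
      intro n p
      have h := hp0 n
      rw [inn_sub_p] at h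
      have h2 : inn N (f - wOp N n f) (f - wOp N n f) = 0 := by
        rcases mul_eq_zero.mp h with h' | h'
        · exfalso
          have : (1/4 : ℂ) ≠ 0 := by norm_num
          exact this h'
        · exact h'
      have h3 : wOp N n f = f := (sub_eq_zero.mp (inn_self_eq_zero h2)).symm
      calc f (sig N n p) = (wOp N n f) p := rfl
      _ = f p := by rw [h3]
    -- assemble
    set C : ℂ := (((2 : ℝ) ^ (-(((N : ℝ) + 1) / 2)) : ℝ) : ℂ) with hCdef
    have hC : C ≠ 0 := by
      rw [hCdef, ne_eq, Complex.ofReal_eq_zero]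
      positivity
    set v0 : ℂ := f (0, fun _ => ((0:ZMod 2), (0:ZMod 2))) with hv0
    set v1 : ℂ := f (1, fun _ => ((0:ZMod 2), (0:ZMod 2))) with hv1
    refine Submodule.mem_span_pair.mpr ⟨(v0 + v1)/(2*C), (v0 - v1)/(2*C), ?_⟩
    funext p
    simp only [Pi.add_apply, Pi.smul_apply, smul_eq_mul]
    by_cases hp : ∀ n : Fin N, (p.2 n).2 = 0
    · have hψp : coh N 0 0 0 p = C := by
        rw [coh]
        simp [hp, hCdef]
      have hψm : coh N 1 0 1 p = C * (-1) ^ ((p.1 + ∑ n : Fin N, (p.2 n).1).val) := by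
        rw [coh]
        have : ∀ n : Fin N, (if (p.2 n).2 = (0 : Fin N → ZMod 2) n then
            (-1 : ℂ) ^ (((1 : Fin N → ZMod 2) n).val * ((p.2 n).1).val) else 0)
            = (-1 : ℂ) ^ (((p.2 n).1).val) := by
          intro n
          simp [hp n, ZMod.val_one]
        rw [Finset.prod_congr rfl (fun n _ => this n), chi_sum, chi_add]
        simp [ZMod.val_one]
        ring
      have hfp : f p = f (p.1 + ∑ n : Fin N, (p.2 n).1, fun _ => ((0:ZMod 2), (0:ZMod 2))) := by
        have hj : p = (p.1, fun n => ((p.2 n).1, 0)) := by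
          refine Prod.ext rfl ?_
          funext n
          exact Prod.ext rfl (hp n)
        conv_lhs => rw [hj]
        exact orbit_const f hfsig Finset.univ p.1 (fun n => (p.2 n).1)
          (fun n hn => absurd (Finset.mem_univ n) hn)
      rw [hψp, hψm, hfp]
      rcases z2cases (p.1 + ∑ n : Fin N, (p.2 n).1) with ht | ht <;> rw [ht]
      · show (v0 + v1)/(2*C) * C + (v0 - v1)/(2*C) * (C * (-1) ^ (ZMod.val (0 : ZMod 2))) = v0
        rw [ZMod.val_zero, pow_zero]
        field_simp
        ring
      · show (v0 + v1)/(2*C) * C + (v0 - v1)/(2*C) * (C * (-1) ^ (ZMod.val (1 : ZMod 2))) = v1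
        rw [ZMod.val_one, pow_one]
        field_simp
        ring
    · push_neg at hp
      obtain ⟨n, hn⟩ := hp
      rw [coh_zero_of_flux n 0 0 p hn, coh_zero_of_flux n 1 1 p hn, hfzero n p hn]
      ring
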